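/- Under the hypotheses of Lemma 1, the iterative sequence x_{n+1} = (x_n + f(x_n))/2 with x₀ ∈ [a,c) satisfies x_n ∈ [a,c] for all n (i.e., [a,c] is invariant under x ↦ (x+f(x))/2). -/

import Mathlib

theorem stmt3 (f : ℝ → ℝ) (a c : ℝ) (hac : a < c)
    (hcont : ContinuousOn f (Set.Icc a c))
    (hdiff : ∀ x ∈ Set.Ioo a c, DifferentiableAt ℝ f x)
    (hderiv : ∀ x ∈ Set.Ioo a c, -1 ≤ deriv f x)
    (hgt : ∀ x ∈ Set.Ico a c, f x > x)
    (hfix : f c = c)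
    (x : ℕ → ℝ) (hx0 : x 0 ∈ Set.Ico a c)
    (hrec : ∀ n, x (n + 1) = (x n + f (x n)) / 2) :
    ∀ n, x n ∈ Set.Icc a c := by
  have hmono : MonotoneOn (fun t => f t + t) (Set.Icc a c) := by
    apply monotoneOn_of_deriv_nonneg (convex_Icc a c)
    · exact hcont.add continuousOn_id
    · intro t ht
      rw [interior_Icc] at ht
      exact ((hdiff t ht).add (differentiableAt_fun_id)).differentiableWithinAt
    · intro t ht
      rw [interior_Icc] at ht
      rw [deriv_fun_add (hdiff t ht) differentiableAt_fun_id, deriv_id'']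
      have := hderiv t ht
      simp only []
      linarith [hderiv t ht]
  have key : ∀ y ∈ Set.Icc a c, f y + y ≤ 2 * c := by
    intro y hy
    have := hmono hy (Set.right_mem_Icc.2 hac.le) hy.2
    simp only [hfix] at this
    linarith
  intro n
  induction n with
  | zero => exact ⟨hx0.1, hx0.2.le⟩
  | succ n ih =>
    rw [hrec n]
    constructor
    · rcases eq_or_lt_of_le ih.2 with h | h
      · rw [h, hfix]; linarith
      · have := hgt (x n) ⟨ih.1, h⟩
        linarith [ih.1]
    · linarith [key (x n) ih]
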